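/- Let Ω be a nonempty finite set, let p and a be probability mass functions on Ω (nonnegative real-valued functions summing to 1) such that a is absolutely continuous with respect to p (i.e., p(ω) = 0 implies a(ω) = 0), let Q : Ω → ℝ be any function, and let ρ < 0 be a real number. Then (1/ρ) · ln( Σ_{ω ∈ Ω} p(ω) · exp(ρ · Q(ω)) ) ≤ Σ_{ω ∈ Ω} a(ω) · Q(ω) + |ρ|⁻¹ · Σ_{ω ∈ Ω} a(ω) · ln( a(ω)/p(ω) ), where the summands with a(ω) = 0 in the last sum are taken to be 0. -/

import Mathlib

/-- Lemma 1 (Donsker–Varadhan style bound): for PMFs `p`, `a` on a nonempty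
finite set with `a` absolutely continuous w.r.t. `p`, any `Q : Ω → ℝ` and
`ρ < 0`, one has
`(1/ρ) ln (Σ p(ω) e^{ρ Q(ω)}) ≤ Σ a(ω) Q(ω) + |ρ|⁻¹ KL(a‖p)`. -/
theorem free_energy_lower_bound {Ω : Type*} [Fintype Ω] [Nonempty Ω]
    (p a : Ω → ℝ) (Q : Ω → ℝ) (ρ : ℝ)
    (hp0 : ∀ ω, 0 ≤ p ω) (hp1 : ∑ ω, p ω = 1)
    (ha0 : ∀ ω, 0 ≤ a ω) (ha1 : ∑ ω, a ω = 1)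
    (hac : ∀ ω, p ω = 0 → a ω = 0)
    (hρ : ρ < 0) :
    (1 / ρ) * Real.log (∑ ω, p ω * Real.exp (ρ * Q ω)) ≤
      ∑ ω, a ω * Q ω + |ρ|⁻¹ * ∑ ω, a ω * Real.log (a ω / p ω) := by
  set Z := ∑ ω, p ω * Real.exp (ρ * Q ω) with hZdef
  have hZpos : 0 < Z := by
    have hex : ∃ ω, 0 < p ω := by
      by_contra h
      push_neg at h
      have : ∑ ω, p ω = 0 :=
        Finset.sum_eq_zero fun ω _ => le_antisymm (h ω) (hp0 ω)
      linarith
    obtain ⟨ω0, hω0⟩ := hex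
    exact Finset.sum_pos' (fun ω _ => mul_nonneg (hp0 ω) (Real.exp_pos _).le)
      ⟨ω0, Finset.mem_univ _, mul_pos hω0 (Real.exp_pos _)⟩
  have hterm : ∀ ω, a ω * (ρ * Q ω) - a ω * Real.log (a ω / p ω) ≤
      p ω * Real.exp (ρ * Q ω) / Z - a ω + a ω * Real.log Z := by
    intro ω
    rcases eq_or_lt_of_le (ha0 ω) with h0 | hapos
    · rw [← h0]
      have h := div_nonneg (mul_nonneg (hp0 ω) (Real.exp_pos (ρ * Q ω)).le) hZpos.le
      simp only [zero_mul, sub_zero, add_zero, zero_add]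
      linarith
    · have hppos : 0 < p ω := by
        rcases eq_or_lt_of_le (hp0 ω) with h | h
        · exfalso; have := hac ω h.symm; linarith
        · exact h
      have hx : 0 < p ω * Real.exp (ρ * Q ω) / (a ω * Z) := by positivity
      have hlog := Real.log_le_sub_one_of_pos hx
      have hexpand : Real.log (p ω * Real.exp (ρ * Q ω) / (a ω * Z)) =
          Real.log (p ω) + ρ * Q ω - Real.log (a ω) - Real.log Z := by
        rw [Real.log_div (by positivity) (by positivity),
          Real.log_mul hppos.ne' (Real.exp_ne_zero _),
          Real.log_mul hapos.ne' hZpos.ne', Real.log_exp]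
        ring
      have hmul := mul_le_mul_of_nonneg_left hlog (ha0 ω)
      rw [hexpand] at hmul
      have hdiv : a ω * (p ω * Real.exp (ρ * Q ω) / (a ω * Z) - 1)
          = p ω * Real.exp (ρ * Q ω) / Z - a ω := by
        field_simp
      rw [hdiv] at hmul
      rw [Real.log_div hapos.ne' hppos.ne']
      nlinarith [hmul]
  have key : ρ * ∑ ω, a ω * Q ω - ∑ ω, a ω * Real.log (a ω / p ω) ≤ Real.log Z := by
    calc ρ * ∑ ω, a ω * Q ω - ∑ ω, a ω * Real.log (a ω / p ω)
        = ∑ ω, (a ω * (ρ * Q ω) - a ω * Real.log (a ω / p ω)) := by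
          rw [Finset.sum_sub_distrib, Finset.mul_sum]
          congr 1
          exact Finset.sum_congr rfl fun ω _ => by ring
      _ ≤ ∑ ω, (p ω * Real.exp (ρ * Q ω) / Z - a ω + a ω * Real.log Z) :=
          Finset.sum_le_sum fun ω _ => hterm ω
      _ = Real.log Z := by
          rw [Finset.sum_add_distrib, Finset.sum_sub_distrib, ← Finset.sum_div,
            ← Finset.sum_mul, ha1, ← hZdef]
          field_simp
          ring
  have habs : |ρ| = -ρ := abs_of_neg hρ
  have h1 : (1 / ρ) * Real.log Z ≤
      (1 / ρ) * (ρ * ∑ ω, a ω * Q ω - ∑ ω, a ω * Real.log (a ω / p ω)) :=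
    mul_le_mul_of_nonpos_left key (le_of_lt (one_div_neg.mpr hρ))
  have h2 : (1 / ρ) * (ρ * ∑ ω, a ω * Q ω - ∑ ω, a ω * Real.log (a ω / p ω)) =
      ∑ ω, a ω * Q ω + (-ρ)⁻¹ * ∑ ω, a ω * Real.log (a ω / p ω) := by
    rw [inv_neg, mul_sub, one_div, ← mul_assoc, inv_mul_cancel₀ hρ.ne, one_mul]
    ring
  rw [habs]
  linarith [h1, h2.le, h2.ge]
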